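/- Let k be a nonnegative integer and ℓ an even integer with ℓ ≥ 2 and p := k + ℓ − 1 ≥ 1. Suppose (U, V) solves the self-similar system (S) on (−1,1), and suppose there exists y₀ ∈ (−1,1) with U(y₀) ≠ 0, V(y₀) ≠ 0 and Re(conj(U(y₀))·V(y₀)) = 0. Then Re(conj(U(y))·V(y)) = 0 for all y ∈ (−1,1), and the functions y ↦ (1+y)^(1/(2p))·U(y) and y ↦ (1−y)^(1/(2p))·V(y) are constant on (−1,1). -/

import Mathlib

open Set Complex Filter Topology

/-- `R(y) = U(y) conj(V(y)) + conj(U(y)) V(y)` (a real number, viewed in `ℂ`). -/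
noncomputable def Rfun (U V : ℝ → ℂ) (y : ℝ) : ℂ :=
  U y * (starRingEnd ℂ) (V y) + (starRingEnd ℂ) (U y) * V y

/-- `F(y) = ℓ (|U|² + |V|²)^k R^{ℓ-1}` (equal to `0` when `ℓ = 0`). -/
noncomputable def Ffun (k l : ℕ) (U V : ℝ → ℂ) (y : ℝ) : ℂ :=
  (l : ℂ) * ((‖U y‖ ^ 2 + ‖V y‖ ^ 2 : ℝ) : ℂ) ^ k *
    (Rfun U V y) ^ (l - 1)

/-- `G(y) = k (|U|² + |V|²)^{k-1} R^ℓ` (equal to `0` when `k = 0`). -/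
noncomputable def Gfun (k l : ℕ) (U V : ℝ → ℂ) (y : ℝ) : ℂ :=
  (k : ℂ) * ((‖U y‖ ^ 2 + ‖V y‖ ^ 2 : ℝ) : ℂ) ^ (k - 1) *
    (Rfun U V y) ^ l

/-- `(U, V)` solves the self-similar system (S) on the open set `J`:
`U, V` are continuously differentiable on `J` and for all `y ∈ J`,
`i[(y+1)U' + U/(2p)] = F V + G U` and `i[(y-1)V' + V/(2p)] = F U + G V`,
where `p = k + ℓ - 1`. -/
def SolvesS (k l : ℕ) (U V : ℝ → ℂ) (J : Set ℝ) : Prop :=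
  ContDiffOn ℝ 1 U J ∧ ContDiffOn ℝ 1 V J ∧
  ∀ y ∈ J,
    Complex.I * ((↑y + 1) * deriv U y + (1 / (2 * ((k + l - 1 : ℕ) : ℂ))) * U y)
      = Ffun k l U V y * V y + Gfun k l U V y * U y ∧
    Complex.I * ((↑y - 1) * deriv V y + (1 / (2 * ((k + l - 1 : ℕ) : ℂ))) * V y)
      = Ffun k l U V y * U y + Gfun k l U V y * V y


/- ### Auxiliary material -/

/-- `S(y) = |U(y)|^2 + |V(y)|^2` viewed in `ℂ`. -/
noncomputable def Saux (U V : ℝ → ℂ) (y : ℝ) : ℂ :=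
  ((‖U y‖ ^ 2 + ‖V y‖ ^ 2 : ℝ) : ℂ)

/-- `D(y) = conj(U) V - U conj(V)`. -/
noncomputable def Daux (U V : ℝ → ℂ) (y : ℝ) : ℂ :=
  (starRingEnd ℂ) (U y) * V y - U y * (starRingEnd ℂ) (V y)

/-- `m(y) = k S^{k-1} R^{ℓ-1}`, so that `G = m R`. -/
noncomputable def maux (k l : ℕ) (U V : ℝ → ℂ) (y : ℝ) : ℂ :=
  (k : ℂ) * Saux U V y ^ (k - 1) * Rfun U V y ^ (l - 1)

/-- The coefficient `c(y)` in the linear ODE `R' = c R`. -/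
noncomputable def caux (k l : ℕ) (U V : ℝ → ℂ) (y : ℝ) : ℂ :=
  Complex.I * maux k l U V y * Daux U V y * (((y : ℂ) + 1)⁻¹ - ((y : ℂ) - 1)⁻¹)
    - (1 / (2 * ((k + l - 1 : ℕ) : ℂ))) * (((y : ℂ) + 1)⁻¹ + ((y : ℂ) - 1)⁻¹)

lemma conj_Rfun (U V : ℝ → ℂ) (y : ℝ) :
    (starRingEnd ℂ) (Rfun U V y) = Rfun U V y := by
  simp only [Rfun, map_add, map_mul, Complex.conj_conj]; ring

lemma conj_Ffun (k l : ℕ) (U V : ℝ → ℂ) (y : ℝ) :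
    (starRingEnd ℂ) (Ffun k l U V y) = Ffun k l U V y := by
  simp only [Ffun, map_mul, map_pow, conj_Rfun, map_natCast, Complex.conj_ofReal]

lemma conj_Gfun (k l : ℕ) (U V : ℝ → ℂ) (y : ℝ) :
    (starRingEnd ℂ) (Gfun k l U V y) = Gfun k l U V y := by
  simp only [Gfun, map_mul, map_pow, conj_Rfun, map_natCast, Complex.conj_ofReal]

lemma Gfun_eq_maux (k l : ℕ) (hl : 1 ≤ l) (U V : ℝ → ℂ) (y : ℝ) :
    Gfun k l U V y = maux k l U V y * Rfun U V y := by
  have hll : l = (l - 1) + 1 := by omega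
  rw [Gfun, maux, Saux]
  calc (k : ℂ) * ((‖U y‖ ^ 2 + ‖V y‖ ^ 2 : ℝ) : ℂ) ^ (k - 1) *
      Rfun U V y ^ l
      = (k : ℂ) * ((‖U y‖ ^ 2 + ‖V y‖ ^ 2 : ℝ) : ℂ) ^ (k - 1) *
      Rfun U V y ^ ((l - 1) + 1) := by rw [← hll]
    _ = _ := by rw [pow_succ]; ring

section Derivs

variable {k l : ℕ} {U V : ℝ → ℂ}

lemma hasDerivAt_of_contDiffOn {f : ℝ → ℂ} {a b : ℝ}
    (hf : ContDiffOn ℝ 1 f (Ioo a b)) {y : ℝ} (hy : y ∈ Ioo a b) :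
    HasDerivAt f (deriv f y) y :=
  ((hf.differentiableOn one_ne_zero).differentiableAt (isOpen_Ioo.mem_nhds hy)).hasDerivAt

lemma hasDerivAt_conj {f : ℝ → ℂ} {f' : ℂ} {y : ℝ} (hf : HasDerivAt f f' y) :
    HasDerivAt (fun t => (starRingEnd ℂ) (f t)) ((starRingEnd ℂ) f') y := by
  exact hf.star

/-- The key computation: `R` satisfies the linear ODE `R' = c R` on `(-1,1)`. -/
lemma Rfun_hasDerivAt (k l : ℕ) (hl : 2 ≤ l) (hp : 1 ≤ k + l - 1) (U V : ℝ → ℂ)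
    (hS : SolvesS k l U V (Ioo (-1 : ℝ) 1)) {y : ℝ} (hy : y ∈ Ioo (-1 : ℝ) 1) :
    HasDerivAt (Rfun U V) (caux k l U V y * Rfun U V y) y := by
  obtain ⟨hU, hV, heq⟩ := hS
  obtain ⟨h1, h2⟩ := heq y hy
  have hq : ((k + l - 1 : ℕ) : ℂ) ≠ 0 := by
    simp only [Ne, Nat.cast_eq_zero]; omega
  have hy1 : ((y : ℂ) + 1) ≠ 0 := by
    have : ((y : ℂ) + 1) = ((y + 1 : ℝ) : ℂ) := by push_cast; ring
    rw [this]; exact Complex.ofReal_ne_zero.mpr (by linarith [hy.1])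
  have hy2 : ((y : ℂ) - 1) ≠ 0 := by
    have : ((y : ℂ) - 1) = ((y - 1 : ℝ) : ℂ) := by push_cast; ring
    rw [this]; exact Complex.ofReal_ne_zero.mpr (by linarith [hy.2])
  have hu := hasDerivAt_of_contDiffOn hU hy
  have hv := hasDerivAt_of_contDiffOn hV hy
  have hcu := hasDerivAt_conj hu
  have hcv := hasDerivAt_conj hv
  have hd : HasDerivAt (Rfun U V)
      (deriv U y * (starRingEnd ℂ) (V y) + U y * (starRingEnd ℂ) (deriv V y)
        + ((starRingEnd ℂ) (deriv U y) * V y + (starRingEnd ℂ) (U y) * deriv V y)) y := by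
    have h := (hu.mul hcv).add (hcu.mul hv)
    have hfun : Rfun U V
        = fun t => U t * (starRingEnd ℂ) (V t) + (starRingEnd ℂ) (U t) * V t := rfl
    rw [hfun]
    exact h
  have e1 : deriv U y
      = (-Complex.I * (Ffun k l U V y * V y + Gfun k l U V y * U y)
        - (1 / (2 * ((k + l - 1 : ℕ) : ℂ))) * U y) / ((y : ℂ) + 1) := by
    rw [eq_div_iff hy1]
    linear_combination (-Complex.I) * h1
      + (((y : ℂ) + 1) * deriv U y + (1 / (2 * ((k + l - 1 : ℕ) : ℂ))) * U y) * Complex.I_sq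
  have e2 : deriv V y
      = (-Complex.I * (Ffun k l U V y * U y + Gfun k l U V y * V y)
        - (1 / (2 * ((k + l - 1 : ℕ) : ℂ))) * V y) / ((y : ℂ) - 1) := by
    rw [eq_div_iff hy2]
    linear_combination (-Complex.I) * h2
      + (((y : ℂ) - 1) * deriv V y + (1 / (2 * ((k + l - 1 : ℕ) : ℂ))) * V y) * Complex.I_sq
  have e1c : (starRingEnd ℂ) (deriv U y)
      = (Complex.I * (Ffun k l U V y * (starRingEnd ℂ) (V y)
          + Gfun k l U V y * (starRingEnd ℂ) (U y))
        - (1 / (2 * ((k + l - 1 : ℕ) : ℂ))) * (starRingEnd ℂ) (U y)) / ((y : ℂ) + 1) := by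
    have h := congrArg (starRingEnd ℂ) e1
    simp only [map_add, map_sub, map_mul, map_neg, map_div₀, map_one, map_ofNat,
      map_natCast, Complex.conj_I, Complex.conj_ofReal, conj_Ffun, conj_Gfun] at h
    rw [h]
    congr 1
    ring
  have e2c : (starRingEnd ℂ) (deriv V y)
      = (Complex.I * (Ffun k l U V y * (starRingEnd ℂ) (U y)
          + Gfun k l U V y * (starRingEnd ℂ) (V y))
        - (1 / (2 * ((k + l - 1 : ℕ) : ℂ))) * (starRingEnd ℂ) (V y)) / ((y : ℂ) - 1) := by
    have h := congrArg (starRingEnd ℂ) e2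
    simp only [map_add, map_sub, map_mul, map_neg, map_div₀, map_one, map_ofNat,
      map_natCast, Complex.conj_I, Complex.conj_ofReal, conj_Ffun, conj_Gfun] at h
    rw [h]
    congr 1
    ring
  have hG := Gfun_eq_maux k l (by omega) U V y
  have hder : deriv U y * (starRingEnd ℂ) (V y) + U y * (starRingEnd ℂ) (deriv V y)
        + ((starRingEnd ℂ) (deriv U y) * V y + (starRingEnd ℂ) (U y) * deriv V y)
      = caux k l U V y * Rfun U V y := by
    rw [e1c, e2c, e1, e2, hG, caux, Daux, Rfun]
    set q : ℂ := ((k + l - 1 : ℕ) : ℂ) with hqdef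
    field_simp
    ring
  rw [← hder]
  exact hd

end Derivs

/-- Continuity of the coefficient `c` on `(-1,1)`. -/
lemma caux_continuousOn (k l : ℕ) (U V : ℝ → ℂ)
    (hU : ContDiffOn ℝ 1 U (Ioo (-1 : ℝ) 1)) (hV : ContDiffOn ℝ 1 V (Ioo (-1 : ℝ) 1)) :
    ContinuousOn (caux k l U V) (Ioo (-1 : ℝ) 1) := by
  have hUc := hU.continuousOn
  have hVc := hV.continuousOn
  have hcUc : ContinuousOn (fun y => (starRingEnd ℂ) (U y)) (Ioo (-1 : ℝ) 1) :=
    continuous_star.comp_continuousOn hUc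
  have hcVc : ContinuousOn (fun y => (starRingEnd ℂ) (V y)) (Ioo (-1 : ℝ) 1) :=
    continuous_star.comp_continuousOn hVc
  have hRc : ContinuousOn (Rfun U V) (Ioo (-1 : ℝ) 1) :=
    (hUc.mul hcVc).add (hcUc.mul hVc)
  have hSc : ContinuousOn (Saux U V) (Ioo (-1 : ℝ) 1) := by
    apply Complex.continuous_ofReal.comp_continuousOn
    exact ((continuous_norm.comp_continuousOn hUc).pow 2).add
      ((continuous_norm.comp_continuousOn hVc).pow 2)
  have hmc : ContinuousOn (maux k l U V) (Ioo (-1 : ℝ) 1) :=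
    (continuousOn_const.mul (hSc.pow _)).mul (hRc.pow _)
  have hDc : ContinuousOn (Daux U V) (Ioo (-1 : ℝ) 1) :=
    (hcUc.mul hVc).sub (hUc.mul hcVc)
  have hi1 : ContinuousOn (fun y : ℝ => ((y : ℂ) + 1)⁻¹) (Ioo (-1 : ℝ) 1) := by
    apply ContinuousOn.inv₀
    · exact (Complex.continuous_ofReal.continuousOn.add continuousOn_const)
    · intro y hy
      have : ((y : ℂ) + 1) = ((y + 1 : ℝ) : ℂ) := by push_cast; ring
      rw [this]; exact Complex.ofReal_ne_zero.mpr (by linarith [hy.1])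
  have hi2 : ContinuousOn (fun y : ℝ => ((y : ℂ) - 1)⁻¹) (Ioo (-1 : ℝ) 1) := by
    apply ContinuousOn.inv₀
    · exact (Complex.continuous_ofReal.continuousOn.sub continuousOn_const)
    · intro y hy
      have : ((y : ℂ) - 1) = ((y - 1 : ℝ) : ℂ) := by push_cast; ring
      rw [this]; exact Complex.ofReal_ne_zero.mpr (by linarith [hy.2])
  exact (((continuousOn_const.mul hmc).mul hDc).mul (hi1.sub hi2)).sub
    (continuousOn_const.mul (hi1.add hi2))

/-- Functions with vanishing derivative on `Ioo` are constant there. -/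
lemma const_of_hasDerivAt_zero {a b : ℝ} {f : ℝ → ℂ}
    (h : ∀ x ∈ Ioo a b, HasDerivAt f 0 x) {x y : ℝ}
    (hx : x ∈ Ioo a b) (hy : y ∈ Ioo a b) : f y = f x := by
  have hb := (convex_Ioo a b).norm_image_sub_le_of_norm_hasDerivWithin_le
    (f' := fun _ => (0 : ℂ)) (C := 0)
    (fun z hz => (h z hz).hasDerivWithinAt) (fun z _ => by simp) hx hy
  rw [zero_mul] at hb
  have := le_antisymm hb (norm_nonneg _)
  rwa [norm_eq_zero, sub_eq_zero] at this

/-- for even `ℓ ≥ 2`, the lines `Re(conj(U) V) = 0` are invariant: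
if `Re(conj(U(y₀)) V(y₀)) = 0` at a point where `U, V ≠ 0`, then
`Re(conj(U) V) ≡ 0` on `(-1,1)` and `(1+y)^{1/(2p)} U` and `(1-y)^{1/(2p)} V`
are constant. -/
theorem even_invariant_lines (k l : ℕ) (hleven : Even l) (hl : 2 ≤ l)
    (hp : 1 ≤ k + l - 1) (U V : ℝ → ℂ)
    (hS : SolvesS k l U V (Ioo (-1 : ℝ) 1))
    (y₀ : ℝ) (hy₀ : y₀ ∈ Ioo (-1 : ℝ) 1)
    (hU0 : U y₀ ≠ 0) (hV0 : V y₀ ≠ 0)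
    (hRe : ((starRingEnd ℂ) (U y₀) * V y₀).re = 0) :
    (∀ y ∈ Ioo (-1 : ℝ) 1, ((starRingEnd ℂ) (U y) * V y).re = 0) ∧
    (∃ c₁ c₂ : ℂ, ∀ y ∈ Ioo (-1 : ℝ) 1,
      (((1 + y) ^ (1 / (2 * ((k + l - 1 : ℕ) : ℝ))) : ℝ) : ℂ) * U y = c₁ ∧
      (((1 - y) ^ (1 / (2 * ((k + l - 1 : ℕ) : ℝ))) : ℝ) : ℂ) * V y = c₂) := by
  obtain ⟨hU, hV, heq⟩ := hS
  have hJ : IsOpen (Ioo (-1 : ℝ) 1) := isOpen_Ioo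
  have hq : ((k + l - 1 : ℕ) : ℂ) ≠ 0 := by
    simp only [Ne, Nat.cast_eq_zero]; omega
  have hy1 : ∀ y ∈ Ioo (-1 : ℝ) 1, ((y : ℂ) + 1) ≠ 0 := by
    intro y hy
    have h : ((y : ℂ) + 1) = ((y + 1 : ℝ) : ℂ) := by push_cast; ring
    rw [h]; exact Complex.ofReal_ne_zero.mpr (by linarith [hy.1])
  have hy2 : ∀ y ∈ Ioo (-1 : ℝ) 1, ((y : ℂ) - 1) ≠ 0 := by
    intro y hy
    have h : ((y : ℂ) - 1) = ((y - 1 : ℝ) : ℂ) := by push_cast; ring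
    rw [h]; exact Complex.ofReal_ne_zero.mpr (by linarith [hy.2])
  have hc : ContinuousOn (caux k l U V) (Ioo (-1 : ℝ) 1) := caux_continuousOn k l U V hU hV
  set A : ℝ → ℂ := fun y => ∫ t in y₀..y, caux k l U V t with hAdef
  have hAd : ∀ y ∈ Ioo (-1 : ℝ) 1, HasDerivAt A (caux k l U V y) y := by
    intro y hy
    apply intervalIntegral.integral_hasDerivAt_right
    · exact (hc.mono ((Set.ordConnected_Ioo).uIcc_subset hy₀ hy)).intervalIntegrable
    · exact hc.stronglyMeasurableAtFilter hJ y hy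
    · exact hc.continuousAt (hJ.mem_nhds hy)
  have hg : ∀ y ∈ Ioo (-1 : ℝ) 1,
      HasDerivAt (fun t => Complex.exp (-(A t)) * Rfun U V t) 0 y := by
    intro y hy
    have h1 := ((hAd y hy).neg.cexp).mul (Rfun_hasDerivAt k l hl hp U V ⟨hU, hV, heq⟩ hy)
    refine h1.congr_deriv ?_
    ring
  have hRy₀ : Rfun U V y₀ = 0 := by
    have h : Rfun U V y₀ = ((starRingEnd ℂ) (U y₀) * V y₀)
        + (starRingEnd ℂ) ((starRingEnd ℂ) (U y₀) * V y₀) := by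
      rw [Rfun]; simp only [map_mul, Complex.conj_conj]; ring
    rw [h, Complex.add_conj, hRe]
    simp
  have hR0 : ∀ y ∈ Ioo (-1 : ℝ) 1, Rfun U V y = 0 := by
    intro y hy
    have hconst := const_of_hasDerivAt_zero hg hy₀ hy
    have h0 : Complex.exp (-(A y)) * Rfun U V y = 0 := by
      rw [hconst, hRy₀]; ring
    exact (mul_eq_zero.mp h0).resolve_left (Complex.exp_ne_zero _)
  constructor
  · intro y hy
    have h := hR0 y hy
    have h2 : ((starRingEnd ℂ) (U y) * V y) + (starRingEnd ℂ) ((starRingEnd ℂ) (U y) * V y)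
        = 0 := by
      rw [← h, Rfun]; simp only [map_mul, Complex.conj_conj]; ring
    rw [Complex.add_conj] at h2
    have h3 := Complex.ofReal_eq_zero.mp (by exact_mod_cast h2)
    linarith
  · -- F and G vanish
    have hF0 : ∀ y ∈ Ioo (-1 : ℝ) 1, Ffun k l U V y = 0 := by
      intro y hy
      rw [Ffun, hR0 y hy, zero_pow (by omega : l - 1 ≠ 0), mul_zero]
    have hG0 : ∀ y ∈ Ioo (-1 : ℝ) 1, Gfun k l U V y = 0 := by
      intro y hy
      rw [Gfun, hR0 y hy, zero_pow (by omega : l ≠ 0), mul_zero]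
    have hdu : ∀ y ∈ Ioo (-1 : ℝ) 1,
        deriv U y = -U y * (2 * ((k + l - 1 : ℕ) : ℂ))⁻¹ * ((y : ℂ) + 1)⁻¹ := by
      intro y hy
      set q : ℂ := ((k + l - 1 : ℕ) : ℂ) with hqd
      have hrw : ∀ u : ℂ, -u * (2 * q)⁻¹ * ((y : ℂ) + 1)⁻¹
          = -u / (2 * q * ((y : ℂ) + 1)) := by
        intro u; rw [div_eq_mul_inv]; simp only [mul_inv]; ring
      have hq0 : q ≠ 0 := hq
      have hc2 : q * q⁻¹ = 1 := mul_inv_cancel₀ hq0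
      have h1 := (heq y hy).1
      rw [hF0 y hy, hG0 y hy, zero_mul, zero_mul, add_zero] at h1
      rw [hrw, eq_div_iff (mul_ne_zero (mul_ne_zero two_ne_zero hq0) (hy1 y hy))]
      linear_combination (-2 * q * Complex.I) * h1
        + (2 * q * (((y : ℂ) + 1) * deriv U y + 1 / (2 * q) * U y)) * Complex.I_sq
        - U y * hc2
    have hdv : ∀ y ∈ Ioo (-1 : ℝ) 1,
        deriv V y = -V y * (2 * ((k + l - 1 : ℕ) : ℂ))⁻¹ * ((y : ℂ) - 1)⁻¹ := by
      intro y hy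
      set q : ℂ := ((k + l - 1 : ℕ) : ℂ) with hqd
      have hrw : ∀ u : ℂ, -u * (2 * q)⁻¹ * ((y : ℂ) - 1)⁻¹
          = -u / (2 * q * ((y : ℂ) - 1)) := by
        intro u; rw [div_eq_mul_inv]; simp only [mul_inv]; ring
      have hq0 : q ≠ 0 := hq
      have hc2 : q * q⁻¹ = 1 := mul_inv_cancel₀ hq0
      have h1 := (heq y hy).2
      rw [hF0 y hy, hG0 y hy, zero_mul, zero_mul, add_zero] at h1
      rw [hrw, eq_div_iff (mul_ne_zero (mul_ne_zero two_ne_zero hq0) (hy2 y hy))]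
      linear_combination (-2 * q * Complex.I) * h1
        + (2 * q * (((y : ℂ) - 1) * deriv V y + 1 / (2 * q) * V y)) * Complex.I_sq
        - V y * hc2
    set α : ℝ := 1 / (2 * ((k + l - 1 : ℕ) : ℝ)) with hα
    have hαq : (α : ℂ) = 1 / (2 * ((k + l - 1 : ℕ) : ℂ)) := by
      rw [hα]; push_cast; ring
    -- f₁ has zero derivative
    have hf1 : ∀ y ∈ Ioo (-1 : ℝ) 1,
        HasDerivAt (fun t => (((1 + t) ^ α : ℝ) : ℂ) * U t) 0 y := by
      intro y hy
      have h1y : (0:ℝ) < 1 + y := by linarith [hy.1]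
      have hbase : HasDerivAt (fun t : ℝ => 1 + t) 1 y := by
        simpa using (hasDerivAt_id y).const_add 1
      have hr : HasDerivAt (fun t : ℝ => (1 + t) ^ α) (α * (1 + y) ^ (α - 1) * 1) y :=
        (Real.hasDerivAt_rpow_const (Or.inl (ne_of_gt h1y))).comp y hbase
      have hu := hasDerivAt_of_contDiffOn hU hy
      have h := (hr.ofReal_comp).mul hu
      refine h.congr_deriv ?_
      symm
      have hpow : ((1:ℝ) + y) ^ α = (1 + y) ^ (α - 1) * (1 + y) := by
        have h2 := Real.rpow_add_one (ne_of_gt h1y) (α - 1)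
        simpa [sub_add_cancel] using h2
      rw [hdu y hy, hpow]
      push_cast
      rw [hαq]
      have hcy : ((y : ℂ) + 1) * ((y : ℂ) + 1)⁻¹ = 1 := mul_inv_cancel₀ (hy1 y hy)
      linear_combination (1 / (2 * ((k + l - 1 : ℕ) : ℂ))
        * ((((1 + y) ^ (α - 1) : ℝ)) : ℂ) * U y) * hcy
    have hf2 : ∀ y ∈ Ioo (-1 : ℝ) 1,
        HasDerivAt (fun t => (((1 - t) ^ α : ℝ) : ℂ) * V t) 0 y := by
      intro y hy
      have h1y : (0:ℝ) < 1 - y := by linarith [hy.2]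
      have hbase : HasDerivAt (fun t : ℝ => 1 - t) (-1) y := by
        simpa using ((hasDerivAt_id y).const_sub 1)
      have hr : HasDerivAt (fun t : ℝ => (1 - t) ^ α) (α * (1 - y) ^ (α - 1) * (-1)) y :=
        (Real.hasDerivAt_rpow_const (Or.inl (ne_of_gt h1y))).comp y hbase
      have hv := hasDerivAt_of_contDiffOn hV hy
      have h := (hr.ofReal_comp).mul hv
      refine h.congr_deriv ?_
      symm
      have hpow : ((1:ℝ) - y) ^ α = (1 - y) ^ (α - 1) * (1 - y) := by
        have h2 := Real.rpow_add_one (ne_of_gt h1y) (α - 1)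
        simpa [sub_add_cancel] using h2
      rw [hdv y hy, hpow]
      push_cast
      rw [hαq]
      have hcy : ((y : ℂ) - 1) * ((y : ℂ) - 1)⁻¹ = 1 := mul_inv_cancel₀ (hy2 y hy)
      linear_combination (-(1 / (2 * ((k + l - 1 : ℕ) : ℂ)))
        * ((((1 - y) ^ (α - 1) : ℝ)) : ℂ) * V y) * hcy
    refine ⟨(((1 + y₀) ^ α : ℝ) : ℂ) * U y₀, (((1 - y₀) ^ α : ℝ) : ℂ) * V y₀, ?_⟩
    intro y hy
    exact ⟨const_of_hasDerivAt_zero hf1 hy₀ hy, const_of_hasDerivAt_zero hf2 hy₀ hy⟩
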